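/- Let x₀ be a character of M and n a normalizer of M with x₀(n*n) ≠ 0, and let y = αₙ(x₀). Then y has trivial isotropy if and only if x₀ has trivial isotropy. -/

import Mathlib

open scoped ComplexOrder InnerProductSpace

variable {A : Type*} [NormedRing A] [StarRing A] [CStarRing A]
  [NormedAlgebra ℂ A] [CompleteSpace A] [StarModule ℂ A]
  [PartialOrder A] [StarOrderedRing A]

/-- `n` is a normalizer of the subalgebra `M`: `n* M n ⊆ M` and `n M n* ⊆ M`
(in particular `n*n ∈ M` and `n n* ∈ M`, taking `h = 1`). -/
structure IsNormalizer (M : StarSubalgebra ℂ A) (n : A) : Prop where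
  conj_mem : ∀ h ∈ M, star n * h * n ∈ M
  conj_mem' : ∀ h ∈ M, n * h * star n ∈ M
  sq_mem : star n * n ∈ M
  sq_mem' : n * star n ∈ M

/-- `y = αₙ(x)`: the character `y` satisfies `x(n* h n) = y(h) · x(n*n)` for all `h ∈ M`. -/
def IsAlpha (M : StarSubalgebra ℂ A) (n : A) (hn : IsNormalizer M n)
    (x y : M →⋆ₐ[ℂ] ℂ) : Prop :=
  ∀ h : M, x ⟨star n * (h : A) * n, hn.conj_mem (h : A) h.2⟩
    = y h * x ⟨star n * n, hn.sq_mem⟩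

/-- `y` lies in the pseudo-orbit `𝒢(x₀)`: there is a normalizer `m` of `M` with
`x₀(m*m) ≠ 0` and `y = α_m(x₀)`. -/
def InPseudoOrbit (M : StarSubalgebra ℂ A) (x₀ y : M →⋆ₐ[ℂ] ℂ) : Prop :=
  ∃ m, ∃ hm : IsNormalizer M m,
    x₀ ⟨star m * m, hm.sq_mem⟩ ≠ 0 ∧ IsAlpha M m hm x₀ y

/-- `x₀` has trivial isotropy: every normalizer `m` with `x₀(m*m) ≠ 0` whose associated
partial map fixes `x₀` (i.e. `α_m(x₀) = x₀`) satisfies `x₀(E(m)) ≠ 0`. -/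
def HasTrivialIsotropy (M : StarSubalgebra ℂ A) (E : A →ₗ[ℂ] A)
    (hErange : ∀ a, E a ∈ M) (x₀ : M →⋆ₐ[ℂ] ℂ) : Prop :=
  ∀ m, ∀ hm : IsNormalizer M m,
    x₀ ⟨star m * m, hm.sq_mem⟩ ≠ 0 → IsAlpha M m hm x₀ x₀ →
      x₀ ⟨E m, hErange m⟩ ≠ 0


private lemma alphaA {M : StarSubalgebra ℂ A} {n : A} (hn : IsNormalizer M n)
    {x₀ y : M →⋆ₐ[ℂ] ℂ}
    (hx : x₀ ⟨star n * n, hn.sq_mem⟩ ≠ 0)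
    (hy : IsAlpha M n hn x₀ y) (h : M) :
    y ⟨n * (h : A) * star n, hn.conj_mem' _ h.2⟩
      = x₀ h * x₀ ⟨star n * n, hn.sq_mem⟩ := by
  have key := hy ⟨n * (h : A) * star n, hn.conj_mem' _ h.2⟩
  have e1 : (⟨star n * (n * (h : A) * star n) * n,
        hn.conj_mem _ (hn.conj_mem' _ h.2)⟩ : M)
      = ⟨star n * n, hn.sq_mem⟩ * h * ⟨star n * n, hn.sq_mem⟩ :=
    Subtype.ext (show star n * (n * (h : A) * star n) * n
      = (star n * n) * (h : A) * (star n * n) by noncomm_ring)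
  rw [e1, map_mul, map_mul] at key
  have := mul_right_cancel₀ hx key.symm
  rw [this]; ring

private lemma stepTI {M : StarSubalgebra ℂ A} (E : A →ₗ[ℂ] A) (hErange : ∀ a, E a ∈ M)
    (hEcov : ∀ k, IsNormalizer M k → ∀ a, E (star k * a * k) = star k * E a * k)
    {x₀ y : M →⋆ₐ[ℂ] ℂ} {n : A} (hn : IsNormalizer M n)
    (hx : x₀ ⟨star n * n, hn.sq_mem⟩ ≠ 0)
    (hy : IsAlpha M n hn x₀ y)
    (H : HasTrivialIsotropy M E hErange x₀) :
    HasTrivialIsotropy M E hErange y := by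
  intro m hm hym hmy
  have hk : IsNormalizer M (star n * m * n) := by
    constructor
    · intro h hh
      have e : star (star n * m * n) * h * (star n * m * n)
          = star n * (star m * (n * h * star n) * m) * n := by
        simp only [star_mul, star_star]; noncomm_ring
      rw [e]; exact hn.conj_mem _ (hm.conj_mem _ (hn.conj_mem' _ hh))
    · intro h hh
      have e : (star n * m * n) * h * star (star n * m * n)
          = star n * (m * (n * h * star n) * star m) * n := by
        simp only [star_mul, star_star]; noncomm_ring
      rw [e]; exact hn.conj_mem _ (hm.conj_mem' _ (hn.conj_mem' _ hh))
    · have e : star (star n * m * n) * (star n * m * n)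
          = star n * (star m * (n * star n) * m) * n := by
        simp only [star_mul, star_star]; noncomm_ring
      rw [e]; exact hn.conj_mem _ (hm.conj_mem _ hn.sq_mem')
    · have e : (star n * m * n) * star (star n * m * n)
          = star n * (m * (n * star n) * star m) * n := by
        simp only [star_mul, star_star]; noncomm_ring
      rw [e]; exact hn.conj_mem _ (hm.conj_mem' _ hn.sq_mem')
  set N : M := (⟨star n * n, hn.sq_mem⟩ : M) with hN
  set P : M := (⟨n * star n, hn.sq_mem'⟩ : M) with hP
  set Q : M := (⟨star m * m, hm.sq_mem⟩ : M) with hQ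
  have A0 := alphaA hn hx hy
  have yP : y P = x₀ N := by
    have := A0 1
    have e1 : (⟨n * ((1 : M) : A) * star n, hn.conj_mem' _ (1 : M).2⟩ : M) = P :=
      Subtype.ext (by simp [hP])
    rw [e1, map_one, one_mul] at this
    exact this
  -- x₀ applied to star k * k
  have hc1 : x₀ ⟨star (star n * m * n) * (star n * m * n), hk.sq_mem⟩
      = x₀ N * y Q * x₀ N := by
    have e1 : (⟨star (star n * m * n) * (star n * m * n), hk.sq_mem⟩ : M)
        = ⟨star n * ((star m * (n * star n) * m)) * n,
            hn.conj_mem _ (hm.conj_mem _ hn.sq_mem')⟩ :=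
      Subtype.ext (by simp only [star_mul, star_star]; noncomm_ring)
    rw [e1]
    have h2 := hy ⟨star m * (n * star n) * m, hm.conj_mem _ hn.sq_mem'⟩
    rw [h2]
    have h3 := hmy P
    have e2 : (⟨star m * (P : A) * m, hm.conj_mem _ P.2⟩ : M)
        = ⟨star m * (n * star n) * m, hm.conj_mem _ hn.sq_mem'⟩ := rfl
    rw [e2] at h3
    rw [h3, yP]
  have hc1ne : x₀ ⟨star (star n * m * n) * (star n * m * n), hk.sq_mem⟩ ≠ 0 := by
    rw [hc1]; exact mul_ne_zero (mul_ne_zero hx hym) hx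
  have halpha : IsAlpha M (star n * m * n) hk x₀ x₀ := by
    intro h
    have e1 : (⟨star (star n * m * n) * (h : A) * (star n * m * n),
          hk.conj_mem _ h.2⟩ : M)
        = ⟨star n * (star m * (n * (h : A) * star n) * m) * n,
            hn.conj_mem _ (hm.conj_mem _ (hn.conj_mem' _ h.2))⟩ :=
      Subtype.ext (by simp only [star_mul, star_star]; noncomm_ring)
    rw [e1]
    have h2 := hy ⟨star m * (n * (h : A) * star n) * m,
      hm.conj_mem _ (hn.conj_mem' _ h.2)⟩
    rw [h2]
    have h3 := hmy ⟨n * (h : A) * star n, hn.conj_mem' _ h.2⟩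
    have e2 : (⟨star m * ((⟨n * (h : A) * star n, hn.conj_mem' _ h.2⟩ : M) : A) * m,
          hm.conj_mem _ (hn.conj_mem' _ h.2)⟩ : M)
        = ⟨star m * (n * (h : A) * star n) * m,
            hm.conj_mem _ (hn.conj_mem' _ h.2)⟩ := rfl
    rw [e2] at h3
    rw [h3, A0 h, hc1]; ring
  have hEk := H (star n * m * n) hk hc1ne halpha
  have eE : (⟨E (star n * m * n), hErange _⟩ : M)
      = ⟨star n * (E m) * n, hn.conj_mem _ (hErange m)⟩ :=
    Subtype.ext (hEcov n hn m)
  rw [eE] at hEk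
  have h4 := hy ⟨E m, hErange m⟩
  rw [h4] at hEk
  exact fun h0 => hEk (by rw [h0, zero_mul])

/-- Trivial isotropy is preserved along the pseudo-orbit: if `n` is a normalizer of `M` with
`x₀(n*n) ≠ 0` and `y = αₙ(x₀)`, then `y` has trivial isotropy iff `x₀` has trivial
isotropy. -/
theorem hasTrivialIsotropy_iff_of_isAlpha
    (M : StarSubalgebra ℂ A) (hMclosed : IsClosed (M : Set A))
    (hMcomm : ∀ a ∈ M, ∀ b ∈ M, a * b = b * a)
    (E : A →ₗ[ℂ] A)
    (hErange : ∀ a, E a ∈ M)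
    (hEfix : ∀ h ∈ M, E h = h)
    (hEpos : ∀ a : A, 0 ≤ a → 0 ≤ E a)
    (hEcov : ∀ k, IsNormalizer M k → ∀ a, E (star k * a * k) = star k * E a * k)
    (x₀ y : M →⋆ₐ[ℂ] ℂ)
    (n : A) (hn : IsNormalizer M n)
    (hx : x₀ ⟨star n * n, hn.sq_mem⟩ ≠ 0)
    (hy : IsAlpha M n hn x₀ y) :
    HasTrivialIsotropy M E hErange y ↔ HasTrivialIsotropy M E hErange x₀ := by
  have hn' : IsNormalizer M (star n) := by
    constructor
    · intro h hh
      have e : star (star n) * h * star n = n * h * star n := by rw [star_star]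
      rw [e]; exact hn.conj_mem' _ hh
    · intro h hh
      have e : star n * h * star (star n) = star n * h * n := by rw [star_star]
      rw [e]; exact hn.conj_mem _ hh
    · have e : star (star n) * star n = n * star n := by rw [star_star]
      rw [e]; exact hn.sq_mem'
    · have e : star n * star (star n) = star n * n := by rw [star_star]
      rw [e]; exact hn.sq_mem
  have A0 := alphaA hn hx hy
  have yP : y ⟨star (star n) * star n, hn'.sq_mem⟩ = x₀ ⟨star n * n, hn.sq_mem⟩ := by
    have := A0 1
    have e1 : (⟨n * ((1 : M) : A) * star n, hn.conj_mem' _ (1 : M).2⟩ : M)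
        = ⟨star (star n) * star n, hn'.sq_mem⟩ :=
      Subtype.ext (by simp)
    rw [e1, map_one, one_mul] at this
    exact this
  have hx' : y ⟨star (star n) * star n, hn'.sq_mem⟩ ≠ 0 := by rw [yP]; exact hx
  have hy' : IsAlpha M (star n) hn' y x₀ := by
    intro h
    have e1 : (⟨star (star n) * (h : A) * star n, hn'.conj_mem _ h.2⟩ : M)
        = ⟨n * (h : A) * star n, hn.conj_mem' _ h.2⟩ :=
      Subtype.ext (show star (star n) * (h : A) * star n
        = n * (h : A) * star n by rw [star_star])
    rw [e1, A0 h, yP]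
  constructor
  · intro hty
    exact stepTI E hErange hEcov hn' hx' hy' hty
  · intro htx
    exact stepTI E hErange hEcov hn hx hy htx
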